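/- Let λ > λ' > 0 and let Θ̂ and Θ̂' be graphical lasso solutions at λ and at λ' respectively for S. Then the vertex-partition induced by the connected components of the estimated concentration graph Ĝ^(λ) is nested within (is a refinement of) that induced by the connected components of Ĝ^(λ'): for all vertices i, j ∈ {1,…,p}, if i and j lie in the same connected component of Ĝ^(λ), then they lie in the same connected component of Ĝ^(λ'). -/

import Mathlib

set_option linter.unusedSectionVars false
set_option linter.unusedVariables false
set_option maxHeartbeats 1000000

open Matrix

/-- The graphical lasso objective: `f(Θ) = -log det Θ + tr(AΘ) + λ ∑_{i,j} |Θ_ij|`. -/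
noncomputable def glassoObj {n : Type*} [Fintype n] [DecidableEq n]
    (lam : ℝ) (A Θ : Matrix n n ℝ) : ℝ :=
  -Real.log Θ.det + (A * Θ).trace + lam * ∑ i, ∑ j, |Θ i j|

/-- `Θ` is a graphical lasso solution at `lam` for `A`: it is (symmetric) positive definite and
minimizes the graphical lasso objective over all symmetric positive definite matrices.
(Over `ℝ`, `Matrix.PosDef` includes symmetry.) -/
def IsGlassoSol {n : Type*} [Fintype n] [DecidableEq n]
    (lam : ℝ) (A Θ : Matrix n n ℝ) : Prop :=
  Θ.PosDef ∧ ∀ Ψ : Matrix n n ℝ, Ψ.PosDef → glassoObj lam A Θ ≤ glassoObj lam A Ψ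

/-- The thresholded sample covariance graph: an edge between distinct `i, j` iff `|S i j| > lam`. -/
def covGraph {n : Type*} (lam : ℝ) (S : Matrix n n ℝ) : SimpleGraph n :=
  SimpleGraph.fromRel (fun i j => lam < |S i j|)

/-- The estimated concentration graph: an edge between distinct `i, j` iff `Θ i j ≠ 0`. -/
def concGraph {n : Type*} (Θ : Matrix n n ℝ) : SimpleGraph n :=
  SimpleGraph.fromRel (fun i j => Θ i j ≠ 0)

namespace GlassoAux

variable {n : Type*} [Fintype n] [DecidableEq n]

lemma dotProduct_self_pos {x : n → ℝ} (hx : x ≠ 0) : 0 < x ⬝ᵥ x := by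
  have hnn : 0 ≤ x ⬝ᵥ x := Finset.sum_nonneg fun i _ => mul_self_nonneg (x i)
  rcases lt_or_eq_of_le hnn with h | h
  · exact h
  · exfalso
    apply hx
    funext i
    have hterm : ∀ j ∈ Finset.univ, (0:ℝ) ≤ x j * x j := fun j _ => mul_self_nonneg (x j)
    have := (Finset.sum_eq_zero_iff_of_nonneg hterm).1 h.symm i (Finset.mem_univ i)
    exact mul_self_eq_zero.1 this

lemma sq_le_dotProduct (x : n → ℝ) (a : n) : x a * x a ≤ x ⬝ᵥ x :=
  Finset.single_le_sum (fun i _ => mul_self_nonneg (x i)) (Finset.mem_univ a)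

lemma quad_abs_le (N : Matrix n n ℝ) (x : n → ℝ) :
    |x ⬝ᵥ N *ᵥ x| ≤ (∑ a, ∑ b, |N a b|) * (x ⬝ᵥ x) := by
  have h1 : x ⬝ᵥ N *ᵥ x = ∑ a, ∑ b, x a * (N a b * x b) := by
    simp [dotProduct, mulVec, Finset.mul_sum]
  rw [h1]
  have h2 : |∑ a, ∑ b, x a * (N a b * x b)| ≤ ∑ a, ∑ b, |x a * (N a b * x b)| := by
    refine (Finset.abs_sum_le_sum_abs _ _).trans ?_
    exact Finset.sum_le_sum fun a _ => Finset.abs_sum_le_sum_abs _ _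
  refine h2.trans ?_
  rw [Finset.sum_mul]
  refine Finset.sum_le_sum fun a _ => ?_
  rw [Finset.sum_mul]
  refine Finset.sum_le_sum fun b _ => ?_
  rw [abs_mul, abs_mul]
  have hxx : |x a| * |x b| ≤ x ⬝ᵥ x := by
    nlinarith [sq_nonneg (|x a| - |x b|), abs_mul_abs_self (x a), abs_mul_abs_self (x b),
      sq_le_dotProduct x a, sq_le_dotProduct x b]
  nlinarith [abs_nonneg (N a b), abs_nonneg (x a), abs_nonneg (x b)]

lemma le_of_forall_le_add {c K B δ : ℝ} (hδ : 0 < δ) (hB : 0 ≤ B)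
    (h : ∀ s : ℝ, 0 < s → s < δ → c ≤ K + B * s) : c ≤ K := by
  by_contra hc
  push_neg at hc
  have hpos : 0 < c - K := by linarith
  set s := min (δ/2) ((c - K)/(B+1)) with hs
  have hs0 : 0 < s := lt_min (by linarith) (by positivity)
  have h1 := h s hs0 (lt_of_le_of_lt (min_le_left _ _) (by linarith))
  have h2 : B * s ≤ B * ((c-K)/(B+1)) := mul_le_mul_of_nonneg_left (min_le_right _ _) hB
  have h4 : (c-K)/(B+1) * B < (c-K)/(B+1) * (B+1) :=
    mul_lt_mul_of_pos_left (lt_add_one B) (by positivity)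
  have h5 : (c-K)/(B+1) * (B+1) = c - K := div_mul_cancel₀ _ (by positivity)
  nlinarith

lemma neg_log_le {u : ℝ} (hu : |u| ≤ 1/2) : -Real.log (1+u) ≤ 2*|u| := by
  obtain ⟨hl, hr⟩ := abs_le.1 hu
  have hx : (0:ℝ) < 1 + u := by linarith
  have h := Real.log_le_sub_one_of_pos (x := (1+u)⁻¹) (by positivity)
  rw [Real.log_inv] at h
  have h2 : (1+u)⁻¹ - 1 = -u / (1+u) := by field_simp; ring
  rw [h2] at h
  have h3 : -u/(1+u) ≤ 2*|u| := by
    rw [div_le_iff₀ hx]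
    nlinarith [le_abs_self (-u), abs_neg u, abs_nonneg u, mul_nonneg (abs_nonneg u) (by linarith : (0:ℝ) ≤ 2*u + 1)]
  linarith

lemma posDef_smul {A : Matrix n n ℝ} (hA : A.PosDef) {c : ℝ} (hc : 0 < c) :
    (c • A).PosDef := by
  rw [posDef_iff_dotProduct_mulVec]
  refine ⟨?_, fun x hx => ?_⟩
  · unfold Matrix.IsHermitian
    rw [conjTranspose_smul, hA.isHermitian.eq, star_trivial]
  · rw [smul_mulVec, dotProduct_smul]
    exact mul_pos hc (hA.dotProduct_mulVec_pos hx)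

lemma posDef_of_posSemidef_det_ne_zero {A : Matrix n n ℝ} (hA : A.PosSemidef)
    (hd : A.det ≠ 0) : A.PosDef := by
  rw [posDef_iff_dotProduct_mulVec]
  refine ⟨hA.isHermitian, fun x hx => ?_⟩
  rcases lt_or_eq_of_le (hA.dotProduct_mulVec_nonneg x) with h | h
  · exact h
  · exfalso
    have h0 : A *ᵥ x = 0 := (hA.dotProduct_mulVec_zero_iff x).1 h.symm
    have hinj := Matrix.mulVec_injective_iff_isUnit.2
      ((Matrix.isUnit_iff_isUnit_det _).2 (isUnit_iff_ne_zero.2 hd))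
    exact hx (hinj (by simpa using h0))

lemma posDef_conj' {A B : Matrix n n ℝ} (hA : A.PosDef) (hB : IsUnit B.det) :
    (Bᴴ * A * B).PosDef := by
  rw [posDef_iff_dotProduct_mulVec]
  refine ⟨isHermitian_conjTranspose_mul_mul B hA.isHermitian, fun x hx => ?_⟩
  have hx' : B *ᵥ x ≠ 0 := by
    intro h
    have hinj := Matrix.mulVec_injective_iff_isUnit.2 ((Matrix.isUnit_iff_isUnit_det _).2 hB)
    exact hx (hinj (by simpa using h))
  simpa only [star_mulVec, dotProduct_mulVec, vecMul_vecMul] using hA.dotProduct_mulVec_pos hx'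

lemma posDef_conj {A B : Matrix n n ℝ} (hA : A.PosDef) (hB : IsUnit B.det) :
    (B * A * Bᴴ).PosDef := by
  have hBH : IsUnit (Bᴴ).det := by rw [det_conjTranspose]; exact hB.star
  simpa only [conjTranspose_conjTranspose] using posDef_conj' hA hBH

/-- Strict log-concavity of det, in the form needed: if `det Y = det X` and the
midpoint has determinant at most `det X`, then `Y = X`. -/
lemma eq_of_det_avg_le {X Y : Matrix n n ℝ} (hX : X.PosDef) (hY : Y.PosDef)
    (hdet : Y.det = X.det) (hle : (((1:ℝ)/2) • (X + Y)).det ≤ X.det) : Y = X := by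
  classical
  set T := (open scoped MatrixOrder in CFC.sqrt X) with hTdef
  have hTps : T.PosSemidef := by
    open scoped MatrixOrder in exact Matrix.nonneg_iff_posSemidef.mp (CFC.sqrt_nonneg X)
  have hTT : T * T = X := by
    open scoped MatrixOrder in exact CFC.sqrt_mul_sqrt_self X hX.posSemidef.nonneg
  have hdX : (0:ℝ) < X.det := hX.det_pos
  have hdT2 : T.det * T.det = X.det := by rw [← det_mul, hTT]
  have hdTne : T.det ≠ 0 := by
    intro h; rw [h, zero_mul] at hdT2; exact hdX.ne' hdT2.symm
  have hTu : IsUnit T.det := isUnit_iff_ne_zero.2 hdTne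
  set R := T⁻¹ with hRdef
  have hRT : R * T = 1 := nonsing_inv_mul T hTu
  have hTR : T * R = 1 := mul_nonsing_inv T hTu
  have hTH : Tᴴ = T := hTps.isHermitian
  have hRH : Rᴴ = R := by rw [hRdef, conjTranspose_nonsing_inv, hTH]
  have hdRT : R.det * T.det = 1 := by rw [← det_mul, hRT, det_one]
  have hRu : IsUnit R.det := IsUnit.of_mul_eq_one _ hdRT
  set K := R * Y * R with hKdef
  have hK : K.PosDef := by
    have := posDef_conj hY hRu
    rwa [hRH] at this
  have hYK : T * K * T = Y := by
    have : T * (R * Y * R) * T = (T * R) * Y * (R * T) := by noncomm_ring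
    rw [hKdef, this, hTR, hRT, one_mul, mul_one]
  have hmid : ((1:ℝ)/2) • (X + Y) = T * (((1:ℝ)/2) • (1 + K)) * T := by
    have h1 : T * (((1:ℝ)/2) • (1 + K)) * T = ((1:ℝ)/2) • (T * (1 + K) * T) := by
      rw [Matrix.mul_smul, Matrix.smul_mul]
    rw [h1, mul_add, add_mul, mul_one, hTT, hYK]
  have hdmid : (((1:ℝ)/2) • (X + Y)).det = X.det * (((1:ℝ)/2) • (1 + K)).det := by
    rw [hmid, det_mul, det_mul, ← hdT2]; ring
  have hdK : K.det = 1 := by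
    have : K.det = R.det * Y.det * R.det := by rw [hKdef, det_mul, det_mul]
    rw [this, hdet, ← hdT2]
    nlinarith [hdRT]
  -- spectral analysis of K
  have hKh : K.IsHermitian := hK.isHermitian
  set μ := hKh.eigenvalues with hμdef
  have hμpos : ∀ i, 0 < μ i := hK.eigenvalues_pos
  have hprodμ : ∏ i, μ i = 1 := by
    have := hKh.det_eq_prod_eigenvalues
    rw [hdK] at this
    exact_mod_cast this.symm
  set U : Matrix n n ℝ := (IsHermitian.eigenvectorUnitary hKh : Matrix n n ℝ) with hUdef
  have hUU : U * star U = 1 := by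
    exact Unitary.coe_mul_star_self _
  have hspec : K = U * diagonal (RCLike.ofReal ∘ μ) * star U := hKh.spectral_theorem
  have hofreal : (RCLike.ofReal ∘ μ : n → ℝ) = μ := by
    funext i; simp [RCLike.ofReal_real_eq_id]
  have hdmid2 : (((1:ℝ)/2) • (1 + K)).det = ∏ i, ((1 + μ i)/2) := by
    have h2 : ((1:ℝ)/2) • (1 + K) = U * (((1:ℝ)/2) • (1 + diagonal μ)) * star U := by
      rw [Matrix.mul_smul, Matrix.smul_mul, mul_add, add_mul, mul_one, hUU]
      rw [hspec, hofreal]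
    rw [h2, det_mul, det_mul]
    have hUdet : U.det * (star U).det = 1 := by rw [← det_mul, hUU, det_one]
    have h3 : ((1:ℝ)/2) • (1 + diagonal μ) = diagonal (fun i => (1 + μ i)/2) := by
      ext i j
      rcases eq_or_ne i j with rfl | hij
      · simp [Matrix.smul_apply]; ring
      · simp [Matrix.smul_apply, Matrix.diagonal_apply_ne _ hij, Matrix.one_apply_ne hij]
    rw [h3, det_diagonal]
    linear_combination (∏ i, ((1 + μ i)/2)) * hUdet
  set P : ℝ := ∏ i, ((1 + μ i)/2) with hP
  have hdle1 : P ≤ 1 := by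
    rw [hdmid, hdmid2] at hle
    nlinarith
  have hPpos : 0 < P := Finset.prod_pos (fun i _ => by nlinarith [hμpos i])
  have hterm : ∀ i, μ i ≤ ((1 + μ i)/2)^2 := fun i => by nlinarith [sq_nonneg (1 - μ i)]
  have hge : (1:ℝ) ≤ P^2 := by
    rw [hP, ← Finset.prod_pow]
    calc (1:ℝ) = ∏ i, μ i := hprodμ.symm
      _ ≤ _ := Finset.prod_le_prod (fun i _ => (hμpos i).le) (fun i _ => hterm i)
  have hP1 : P = 1 := by nlinarith
  have hμ1 : ∀ i, μ i = 1 := by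
    by_contra hcon
    push_neg at hcon
    obtain ⟨j, hj⟩ := hcon
    have hstr : ∏ i, μ i < ∏ i, ((1 + μ i)/2)^2 :=
      Finset.prod_lt_prod (fun i _ => hμpos i) (fun i _ => hterm i)
        ⟨j, Finset.mem_univ j, by nlinarith [mul_self_pos.2 (sub_ne_zero.2 (Ne.symm hj))]⟩
    rw [hprodμ, Finset.prod_pow, ← hP, hP1] at hstr; norm_num at hstr
  have hKone : K = 1 := by
    rw [hspec, hofreal]
    have hμfun : diagonal μ = 1 := by
      rw [show μ = fun _ => (1:ℝ) from funext hμ1]; exact diagonal_one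
    rw [hμfun, mul_one, hUU]
  calc Y = T * K * T := hYK.symm
  _ = X := by rw [hKone, mul_one, hTT]

lemma one_add_smul_posDef (N : Matrix n n ℝ) (hN : N.IsHermitian) :
    ∃ δ : ℝ, 0 < δ ∧ ∀ t : ℝ, |t| < δ → (1 + t • N).PosDef := by
  have hC : 0 ≤ ∑ a, ∑ b, |N a b| :=
    Finset.sum_nonneg fun a _ => Finset.sum_nonneg fun b _ => abs_nonneg _
  refine ⟨1 / ((∑ a, ∑ b, |N a b|) + 1), by positivity, fun t ht => ?_⟩
  rw [posDef_iff_dotProduct_mulVec]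
  refine ⟨?_, fun x hx => ?_⟩
  · unfold Matrix.IsHermitian
    rw [conjTranspose_add, conjTranspose_smul, conjTranspose_one, hN.eq, star_trivial]
  · have hsx : star x = x := by funext i; simp
    rw [hsx, add_mulVec, one_mulVec, smul_mulVec, dotProduct_add, dotProduct_smul,
      smul_eq_mul]
    have h1 : |t| * ((∑ a, ∑ b, |N a b|) + 1) < 1 := by
      rw [lt_div_iff₀ (by positivity)] at ht
      linarith
    have h2 : |t * (x ⬝ᵥ N *ᵥ x)| ≤ |t| * ((∑ a, ∑ b, |N a b|) * (x ⬝ᵥ x)) := by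
      rw [abs_mul]
      exact mul_le_mul_of_nonneg_left (quad_abs_le N x) (abs_nonneg t)
    have h3 := dotProduct_self_pos hx
    have h4 : -(|t| * ((∑ a, ∑ b, |N a b|) * (x ⬝ᵥ x))) ≤ t * (x ⬝ᵥ N *ᵥ x) := by
      have := neg_abs_le (t * (x ⬝ᵥ N *ᵥ x)); linarith
    have h5 : |t| * (∑ a, ∑ b, |N a b|) * (x ⬝ᵥ x) < 1 * (x ⬝ᵥ x) := by
      refine mul_lt_mul_of_pos_right ?_ h3
      nlinarith [abs_nonneg t]
    nlinarith

lemma posDef_add_smul_small {A : Matrix n n ℝ} (hA : A.PosDef) (M : Matrix n n ℝ)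
    (hM : M.IsHermitian) :
    ∃ δ : ℝ, 0 < δ ∧ ∀ t : ℝ, |t| < δ → (A + t • M).PosDef := by
  classical
  set T := (open scoped MatrixOrder in CFC.sqrt A) with hTdef
  have hTps : T.PosSemidef := by
    open scoped MatrixOrder in exact Matrix.nonneg_iff_posSemidef.mp (CFC.sqrt_nonneg A)
  have hTT : T * T = A := by
    open scoped MatrixOrder in exact CFC.sqrt_mul_sqrt_self A hA.posSemidef.nonneg
  have hdA : (0:ℝ) < A.det := hA.det_pos
  have hdT2 : T.det * T.det = A.det := by rw [← det_mul, hTT]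
  have hdTne : T.det ≠ 0 := by
    intro h; rw [h, zero_mul] at hdT2; exact hdA.ne' hdT2.symm
  have hTu : IsUnit T.det := isUnit_iff_ne_zero.2 hdTne
  set R := T⁻¹ with hRdef
  have hRT : R * T = 1 := nonsing_inv_mul T hTu
  have hTR : T * R = 1 := mul_nonsing_inv T hTu
  have hTH : Tᴴ = T := hTps.isHermitian
  have hRH : Rᴴ = R := by rw [hRdef, conjTranspose_nonsing_inv, hTH]
  have hNherm : (R * M * R).IsHermitian := by
    unfold Matrix.IsHermitian
    rw [conjTranspose_mul, conjTranspose_mul, hRH, hM.eq, mul_assoc]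
  obtain ⟨δ, hδ, hδall⟩ := one_add_smul_posDef (R * M * R) hNherm
  refine ⟨δ, hδ, fun t ht => ?_⟩
  have hone := hδall t ht
  have hdec : A + t • M = T * (1 + t • (R * M * R)) * T := by
    have h6 : T * (R * M * R) * T = (T * R) * M * (R * T) := by noncomm_ring
    have h7 : T * (R * M * R) * T = M := by rw [h6, hTR, hRT, one_mul, mul_one]
    calc A + t • M = T * T + t • (T * (R * M * R) * T) := by rw [hTT, h7]
    _ = T * (1 + t • (R * M * R)) * T := by
        rw [mul_add, add_mul, mul_one, Matrix.mul_smul, Matrix.smul_mul]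
  rw [hdec]
  have := posDef_conj hone hTu
  rwa [hTH] at this

lemma trace_mul_single (W : Matrix n n ℝ) (i j : n) :
    (W * (single i j (1:ℝ))).trace = W j i := by
  rw [trace_mul_comm]
  simp [Matrix.trace, Matrix.diag, Matrix.mul_apply, single, Matrix.of_apply, ite_and, Finset.sum_ite_eq]

lemma single_conjTranspose (i j : n) :
    (single i j (1:ℝ))ᴴ = single j i 1 := by
  ext a b
  simp [conjTranspose_apply, single, Matrix.of_apply, and_comm]

lemma sum_ite_pair (i j : n) (c : ℝ) :
    ∑ a, ∑ b, (if i = a ∧ j = b then c else 0) = c := by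
  simp [ite_and, Finset.sum_ite_eq]

lemma pen_add (Θ M : Matrix n n ℝ) (i j : n) (hij : i ≠ j) (hz : Θ i j = 0)
    (hz' : Θ j i = 0)
    (hM : M = single i j (1:ℝ) + single j i 1) (t : ℝ) :
    ∑ a, ∑ b, |(Θ + t • M) a b|
      = (∑ a, ∑ b, |Θ a b|) + (|t| + |t|) := by
  have hab : ∀ a b, |(Θ + t • M) a b|
      = |Θ a b| + ((if i = a ∧ j = b then |t| else 0) + (if j = a ∧ i = b then |t| else 0)) := by
    intro a b
    rw [hM]
    simp only [Matrix.add_apply, Matrix.smul_apply, single, Matrix.of_apply,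
      smul_eq_mul]
    split_ifs with h1 h2 h2
    · exact absurd (h1.1.trans h2.1.symm) hij
    · obtain ⟨rfl, rfl⟩ := h1
      rw [hz]; simp [abs_mul]
    · obtain ⟨rfl, rfl⟩ := h2
      rw [hz']; simp [abs_mul]
    · simp
  simp only [hab]
  have hsplit : ∀ a : n, ∑ b, (|Θ a b| + ((if i = a ∧ j = b then |t| else 0)
      + (if j = a ∧ i = b then |t| else 0)))
      = (∑ b, |Θ a b|) + ((∑ b, if i = a ∧ j = b then |t| else 0)
        + (∑ b, if j = a ∧ i = b then |t| else 0)) := by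
    intro a; rw [Finset.sum_add_distrib, Finset.sum_add_distrib]
  simp only [hsplit]
  rw [Finset.sum_add_distrib, Finset.sum_add_distrib, sum_ite_pair, sum_ite_pair]

lemma poly_eval_bound (Q : Polynomial ℝ) {t : ℝ} (ht : |t| ≤ 1) :
    |Q.eval t| ≤ ∑ k ∈ Finset.range (Q.natDegree + 1), |Q.coeff k| := by
  rw [Polynomial.eval_eq_sum_range]
  refine (Finset.abs_sum_le_sum_abs _ _).trans ?_
  refine Finset.sum_le_sum fun k _ => ?_
  rw [abs_mul, abs_pow]
  exact mul_le_of_le_one_right (abs_nonneg _) (pow_le_one₀ (abs_nonneg t) ht)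

lemma kkt_bound {lam : ℝ} {A Θ : Matrix n n ℝ} (hlam : 0 ≤ lam) (hpd : Θ.PosDef)
    (hmin : ∀ Ψ : Matrix n n ℝ, Ψ.PosDef → glassoObj lam A Θ ≤ glassoObj lam A Ψ)
    {i j : n} (hij : i ≠ j) (hz : Θ i j = 0) (hz' : Θ j i = 0)
    (hW : Θ⁻¹ i j = 0) (hW' : Θ⁻¹ j i = 0) :
    |A i j + A j i| ≤ 2 * lam := by
  classical
  set M : Matrix n n ℝ := single i j (1:ℝ) + single j i 1 with hM
  have hMh : M.IsHermitian := by
    unfold Matrix.IsHermitian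
    rw [hM, conjTranspose_add, single_conjTranspose, single_conjTranspose, add_comm]
  obtain ⟨δ₀, hδ₀, hpdall⟩ := posDef_add_smul_small hpd M hMh
  have hu : IsUnit Θ.det := hpd.det_pos.ne'.isUnit
  have htrWM : (Θ⁻¹ * M).trace = 0 := by
    rw [hM, mul_add, trace_add, trace_mul_single, trace_mul_single, hW, hW', add_zero]
  have htrAM : (A * M).trace = A j i + A i j := by
    rw [hM, mul_add, trace_add, trace_mul_single, trace_mul_single]
  have hfac : ∀ t : ℝ, Θ + t • M = Θ * (1 + t • (Θ⁻¹ * M)) := by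
    intro t
    rw [mul_add, mul_one, Matrix.mul_smul, ← mul_assoc, mul_nonsing_inv _ hu, one_mul]
  obtain ⟨Q, hdet⟩ : ∃ Q : Polynomial ℝ, ∀ t : ℝ,
      (Θ + t • M).det = Θ.det * (1 + Q.eval t * t^2) :=
    ⟨(1 + Polynomial.X • (Θ⁻¹ * M).map Polynomial.C).det.divX.divX, fun t => by
      rw [hfac t, det_mul, det_one_add_smul, htrWM, zero_mul, add_zero]⟩
  set B : ℝ := ∑ k ∈ Finset.range (Q.natDegree + 1), |Q.coeff k| with hB
  have hBnn : 0 ≤ B := Finset.sum_nonneg fun k _ => abs_nonneg _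
  set c₀ : ℝ := A i j + A j i with hc₀
  have master : ∀ t : ℝ, t ≠ 0 → |t| < δ₀ → |t| ≤ 1 → B * (|t| * |t|) ≤ 1/2 →
      -(t * c₀) ≤ 2 * lam * |t| + 2 * B * (|t| * |t|) := by
    intro t htne ht0 ht1 htB
    have hpdt := hpdall t ht0
    have hcomp := hmin _ hpdt
    have huabs : |Q.eval t * t^2| ≤ B * (|t| * |t|) := by
      rw [abs_mul]
      calc |Q.eval t| * |t^2| ≤ B * |t^2| :=
            mul_le_mul_of_nonneg_right (poly_eval_bound Q ht1) (abs_nonneg _)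
      _ = B * (|t| * |t|) := by rw [pow_two, abs_mul]
    have hu2 : |Q.eval t * t^2| ≤ 1/2 := le_trans huabs htB
    have hdetpos : 0 < Θ.det := hpd.det_pos
    have h1u : (0:ℝ) < 1 + Q.eval t * t^2 := by
      have := abs_le.1 hu2; linarith [this.1]
    have hlog : Real.log ((Θ + t • M).det)
        = Real.log Θ.det + Real.log (1 + Q.eval t * t^2) := by
      rw [hdet t, Real.log_mul hdetpos.ne' h1u.ne']
    have htr : (A * (Θ + t • M)).trace = (A * Θ).trace + t * c₀ := by
      rw [mul_add, trace_add, Matrix.mul_smul, trace_smul, htrAM, smul_eq_mul, hc₀]; ring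
    have hpen := pen_add Θ M i j hij hz hz' hM t
    simp only [glassoObj] at hcomp
    rw [hlog, htr, hpen] at hcomp
    have hlb : -Real.log (1 + Q.eval t * t^2) ≤ 2*|Q.eval t * t^2| := neg_log_le hu2
    nlinarith [abs_nonneg t]
  have hδ : 0 < min δ₀ (min 1 (1/(2*B+1))) := by
    refine lt_min hδ₀ (lt_min one_pos (by positivity))
  have hcond : ∀ s : ℝ, 0 < s → s < min δ₀ (min 1 (1/(2*B+1))) →
      s < δ₀ ∧ s ≤ 1 ∧ B * (s * s) ≤ 1/2 := by
    intro s hs0 hs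
    refine ⟨lt_of_lt_of_le hs (min_le_left _ _), ?_, ?_⟩
    · have := lt_of_lt_of_le hs ((min_le_right _ _).trans (min_le_left _ _))
      linarith
    · have h1 : s < 1/(2*B+1) := lt_of_lt_of_le hs ((min_le_right _ _).trans (min_le_right _ _))
      have h2 : s * (2*B+1) < 1 := by
        rw [lt_div_iff₀ (by positivity)] at h1; linarith
      have h3 : s ≤ 1 := by
        have := lt_of_lt_of_le hs ((min_le_right _ _).trans (min_le_left _ _)); linarith
      nlinarith
  have hle1 : c₀ ≤ 2 * lam := by
    refine le_of_forall_le_add hδ (by linarith : (0:ℝ) ≤ 2*B) fun s hs0 hs => ?_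
    obtain ⟨ha, hb, hc⟩ := hcond s hs0 hs
    have hm := master (-s) (neg_ne_zero.2 hs0.ne') (by rwa [abs_neg, abs_of_pos hs0])
      (by rw [abs_neg, abs_of_pos hs0]; exact hb) (by rwa [abs_neg, abs_of_pos hs0])
    rw [abs_neg, abs_of_pos hs0] at hm
    nlinarith
  have hle2 : -c₀ ≤ 2 * lam := by
    refine le_of_forall_le_add hδ (by linarith : (0:ℝ) ≤ 2*B) fun s hs0 hs => ?_
    obtain ⟨ha, hb, hc⟩ := hcond s hs0 hs
    have hm := master s hs0.ne' (by rwa [abs_of_pos hs0])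
      (by rw [abs_of_pos hs0]; exact hb) (by rwa [abs_of_pos hs0])
    rw [abs_of_pos hs0] at hm
    nlinarith
  rw [hc₀] at hle1 hle2 ⊢
  exact abs_le.2 ⟨by linarith, hle1⟩

lemma cov_adj_to_conc_reach {S Θ : Matrix n n ℝ} (hS : S.PosSemidef) {lam : ℝ}
    (hlam : 0 ≤ lam) (hsol : IsGlassoSol lam S Θ) :
    ∀ i j, (covGraph lam S).Adj i j → (concGraph Θ).Reachable i j := by
  classical
  intro i j hadj
  obtain ⟨hne, hor⟩ := (SimpleGraph.fromRel_adj _ i j).1 hadj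
  by_contra hreach
  obtain ⟨hpd, hmin⟩ := hsol
  set d : n → ℝ := fun x => if (concGraph Θ).Reachable i x then 1 else 0 with hd
  set D := diagonal d with hD
  have hcross0 : ∀ x y : n, d x ≠ d y → Θ x y = 0 := by
    intro x y hxy
    by_contra h0
    have hxyne : x ≠ y := fun h => hxy (by rw [h])
    have hadj' : (concGraph Θ).Adj x y :=
      (SimpleGraph.fromRel_adj _ x y).2 ⟨hxyne, Or.inl h0⟩
    have hiff : (concGraph Θ).Reachable i x ↔ (concGraph Θ).Reachable i y :=
      ⟨fun h => h.trans hadj'.reachable, fun h => h.trans hadj'.symm.reachable⟩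
    exact hxy (by simp only [hd]; exact if_congr hiff rfl rfl)
  have hcomm : Θ * D = D * Θ := by
    ext x y
    rw [hD, mul_diagonal, diagonal_mul]
    by_cases hxy : d x = d y
    · rw [hxy, mul_comm]
    · rw [hcross0 x y hxy, zero_mul, mul_zero]
  have hu : IsUnit Θ.det := hpd.det_pos.ne'.isUnit
  have hcommInv : Θ⁻¹ * D = D * Θ⁻¹ := by
    calc Θ⁻¹ * D = Θ⁻¹ * D * (Θ * Θ⁻¹) := by rw [mul_nonsing_inv _ hu, mul_one]
    _ = Θ⁻¹ * (D * Θ) * Θ⁻¹ := by noncomm_ring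
    _ = Θ⁻¹ * (Θ * D) * Θ⁻¹ := by rw [hcomm]
    _ = (Θ⁻¹ * Θ) * (D * Θ⁻¹) := by noncomm_ring
    _ = D * Θ⁻¹ := by rw [nonsing_inv_mul _ hu, one_mul]
  have hdi : d i = 1 := by simp only [hd]; rw [if_pos (SimpleGraph.Reachable.refl i)]
  have hdj : d j = 0 := by simp only [hd]; rw [if_neg hreach]
  have hWij : Θ⁻¹ i j = 0 := by
    have h := congrFun (congrFun hcommInv i) j
    rw [hD] at h
    have h1 : (Θ⁻¹ * diagonal d) i j = Θ⁻¹ i j * d j := mul_diagonal _ _ _ _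
    have h2 : (diagonal d * Θ⁻¹) i j = d i * Θ⁻¹ i j := diagonal_mul _ _ _ _
    rw [h1, h2, hdi, hdj, mul_zero, one_mul] at h
    exact h.symm
  have hWji : Θ⁻¹ j i = 0 := by
    have h := congrFun (congrFun hcommInv j) i
    rw [hD] at h
    have h1 : (Θ⁻¹ * diagonal d) j i = Θ⁻¹ j i * d i := mul_diagonal _ _ _ _
    have h2 : (diagonal d * Θ⁻¹) j i = d j * Θ⁻¹ j i := diagonal_mul _ _ _ _
    rw [h1, h2, hdi, hdj, mul_one, zero_mul] at h
    exact h
  have hdij : d i ≠ d j := by rw [hdi, hdj]; norm_num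
  have hzij : Θ i j = 0 := hcross0 i j hdij
  have hzji : Θ j i = 0 := hcross0 j i (by rw [hdi, hdj]; norm_num)
  have hk := kkt_bound hlam hpd hmin hne hzij hzji hWij hWji
  have hsymS : S j i = S i j := by
    have := hS.isHermitian.apply i j
    simpa using this
  have habs : |S i j| ≤ lam := by
    rw [hsymS] at hk
    rw [show S i j + S i j = 2 * S i j by ring, abs_mul] at hk
    simp only [abs_two] at hk
    linarith [hk, abs_nonneg (S i j)]
  rcases hor with h | h
  · exact absurd habs (not_le.2 h)
  · rw [hsymS] at h; exact absurd habs (not_le.2 h)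

lemma conc_adj_to_cov_reach {S Θ : Matrix n n ℝ} {lam : ℝ}
    (hlam : 0 < lam) (hsol : IsGlassoSol lam S Θ) :
    ∀ a b, (concGraph Θ).Adj a b → (covGraph lam S).Reachable a b := by
  classical
  intro a b hadj
  obtain ⟨hne, hor⟩ := (SimpleGraph.fromRel_adj _ a b).1 hadj
  obtain ⟨hpd, hmin⟩ := hsol
  have hsym : ∀ x y, Θ y x = Θ x y := by
    intro x y
    have := hpd.isHermitian.apply x y
    simpa using this
  have hab : Θ a b ≠ 0 := by
    rcases hor with h | h
    · exact h
    · rw [← hsym a b]; exact h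
  by_contra hreach
  set d : n → ℝ := fun x => if (covGraph lam S).Reachable a x then 1 else -1 with hd
  set D := diagonal d with hD
  have hd2 : ∀ x, d x * d x = 1 := by
    intro x; simp only [hd]; split_ifs <;> norm_num
  have hdeq : ∀ x y, d x = d y ∨ d x * d y = -1 := by
    intro x y; simp only [hd]; split_ifs <;> norm_num
  have hDu : IsUnit D.det := by
    rw [hD, det_diagonal]
    refine isUnit_iff_ne_zero.2 (Finset.prod_ne_zero_iff.2 fun x _ => ?_)
    simp only [hd]; split_ifs <;> norm_num
  have hDH : Dᴴ = D := by
    rw [hD, diagonal_conjTranspose]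
    congr 1
  have hDΘD : ∀ x y, (D * Θ * D) x y = d x * Θ x y * d y := by
    intro x y
    rw [hD, mul_diagonal, diagonal_mul]
  have hYpd : (D * Θ * D).PosDef := by
    have := posDef_conj hpd hDu
    rwa [hDH] at this
  set Ψ := ((1:ℝ)/2) • (Θ + D * Θ * D) with hΨ
  have hΨpd : Ψ.PosDef := posDef_smul (hpd.add hYpd) (by norm_num)
  have hΨapp : ∀ x y, Ψ x y = if d x = d y then Θ x y else 0 := by
    intro x y
    have h1 : Ψ x y = (1/2) * (Θ x y + d x * Θ x y * d y) := by
      rw [hΨ, Matrix.smul_apply, Matrix.add_apply, hDΘD, smul_eq_mul]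
    rcases hdeq x y with h | h
    · rw [if_pos h, h1, ← h]
      linear_combination (Θ x y / 2) * hd2 x
    · rw [if_neg, h1]
      · have : d x * Θ x y * d y = -Θ x y := by
          have h' : d x * d y = -1 := h
          calc d x * Θ x y * d y = (d x * d y) * Θ x y := by ring
          _ = -Θ x y := by rw [h']; ring
        rw [this]; ring
      · intro heq
        rw [heq] at h
        rw [hd2 y] at h
        norm_num at h
  -- cross pairs have small S entries
  have hcross : ∀ x y, d x ≠ d y → |S x y| ≤ lam := by
    intro x y hxy
    have hxyne : x ≠ y := fun h => hxy (by rw [h])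
    have hnadj : ¬ (covGraph lam S).Adj x y := by
      intro hADJ
      have hiff : (covGraph lam S).Reachable a x ↔ (covGraph lam S).Reachable a y :=
        ⟨fun h => h.trans hADJ.reachable, fun h => h.trans hADJ.symm.reachable⟩
      exact hxy (by simp only [hd]; exact if_congr hiff rfl rfl)
    have hn2 : ¬ (x ≠ y ∧ (lam < |S x y| ∨ lam < |S y x|)) :=
      fun hc => hnadj ((SimpleGraph.fromRel_adj _ x y).2 hc)
    push_neg at hn2
    exact (hn2 hxyne).1
  -- termwise comparison of trace + penalty
  have key : ∀ x y, S x y * Ψ y x + lam * |Ψ x y| ≤ S x y * Θ y x + lam * |Θ x y| := by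
    intro x y
    by_cases hcase : d x = d y
    · rw [hΨapp, hΨapp, if_pos hcase, if_pos hcase.symm]
    · rw [hΨapp, hΨapp, if_neg hcase, if_neg (fun h => hcase (h.symm)), hsym]
      simp only [mul_zero, abs_zero, add_zero]
      have h1 : |S x y| ≤ lam := hcross x y hcase
      have h2 : -(|S x y| * |Θ x y|) ≤ S x y * Θ x y := by
        rw [← abs_mul]; exact neg_abs_le _
      nlinarith [abs_nonneg (Θ x y), abs_nonneg (S x y),
        mul_le_mul_of_nonneg_right h1 (abs_nonneg (Θ x y))]
  have htr : ∀ (Z : Matrix n n ℝ), (S * Z).trace = ∑ x, ∑ y, S x y * Z y x := by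
    intro Z; simp [Matrix.trace, Matrix.diag, Matrix.mul_apply]
  have hmono : (S * Ψ).trace + lam * ∑ x, ∑ y, |Ψ x y|
      ≤ (S * Θ).trace + lam * ∑ x, ∑ y, |Θ x y| := by
    rw [htr, htr, Finset.mul_sum, Finset.mul_sum, ← Finset.sum_add_distrib,
      ← Finset.sum_add_distrib]
    refine Finset.sum_le_sum fun x _ => ?_
    rw [Finset.mul_sum, Finset.mul_sum, ← Finset.sum_add_distrib, ← Finset.sum_add_distrib]
    exact Finset.sum_le_sum fun y _ => key x y
  have hcomp := hmin Ψ hΨpd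
  simp only [glassoObj] at hcomp
  have hlogle : Real.log Ψ.det ≤ Real.log Θ.det := by linarith
  have hdetle : Ψ.det ≤ Θ.det :=
    (Real.log_le_log_iff hΨpd.det_pos hpd.det_pos).1 hlogle
  have hDD : D.det * D.det = 1 := by
    rw [hD, det_diagonal, ← Finset.prod_mul_distrib]
    exact Finset.prod_eq_one fun x _ => hd2 x
  have hdetY : (D * Θ * D).det = Θ.det := by
    rw [det_mul, det_mul]
    linear_combination Θ.det * hDD
  rw [hΨ] at hdetle
  have heq := eq_of_det_avg_le hpd hYpd hdetY hdetle
  have hentry := congrFun (congrFun heq a) b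
  rw [hDΘD] at hentry
  have hda : d a = 1 := by
    simp only [hd]; rw [if_pos (SimpleGraph.Reachable.refl a)]
  have hdb : d b = -1 := by
    simp only [hd]; rw [if_neg hreach]
  rw [hda, hdb] at hentry
  apply hab
  linarith [hentry]

lemma reachable_of_adj_imp {V : Type*} {G H : SimpleGraph V}
    (h : ∀ a b, G.Adj a b → H.Reachable a b) {i j : V} (hr : G.Reachable i j) :
    H.Reachable i j := by
  obtain ⟨w⟩ := hr
  induction w with
  | nil => exact SimpleGraph.Reachable.refl _
  | cons ha _ ih => exact (h _ _ ha).trans ih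

end GlassoAux

/-- the vertex partition induced by the components of the estimated concentration
graph at `lam` refines the one at `lam' < lam`. -/
theorem glasso_components_nested
    (p : ℕ) (hp : 1 ≤ p) (S : Matrix (Fin p) (Fin p) ℝ) (hS : S.PosSemidef)
    (lam lam' : ℝ) (hlam' : 0 < lam') (hlt : lam' < lam)
    (Θ Θ' : Matrix (Fin p) (Fin p) ℝ)
    (hΘ : IsGlassoSol lam S Θ) (hΘ' : IsGlassoSol lam' S Θ') :
    ∀ i j : Fin p,
      (concGraph Θ).Reachable i j → (concGraph Θ').Reachable i j := by
  intro i j hreach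
  have h1 : (covGraph lam S).Reachable i j :=
    GlassoAux.reachable_of_adj_imp
      (GlassoAux.conc_adj_to_cov_reach (lt_trans hlam' hlt) hΘ) hreach
  have hle : covGraph lam S ≤ covGraph lam' S := by
    intro x y hxy
    obtain ⟨hne, h⟩ := (SimpleGraph.fromRel_adj _ x y).1 hxy
    refine (SimpleGraph.fromRel_adj _ x y).2 ⟨hne, ?_⟩
    rcases h with h | h
    · exact Or.inl (lt_trans hlt h)
    · exact Or.inr (lt_trans hlt h)
  have h2 : (covGraph lam' S).Reachable i j := h1.mono hle
  exact GlassoAux.reachable_of_adj_imp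
    (GlassoAux.cov_adj_to_conc_reach hS hlam'.le hΘ') h2
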